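/- Let R > 0 and let g : ℝ → ℝ be integrable with support contained in [−R, R]. Then for every complex number z with |z| > R, the function u ↦ g(u)/(z − u) is integrable and ∫_ℝ g(u)/(z − u) du = Σ_{j=0}^∞ z^{−j−1} ∫_ℝ u^j g(u) du, the series on the right converging absolutely. -/

import Mathlib

open MeasureTheory

/-- Laurent expansion of the Cauchy transform at infinity: for an
integrable `g : ℝ → ℝ` supported in `[-R, R]` and a complex `z` with `|z| > R`,
the function `u ↦ g u / (z - u)` is integrable, the series
`∑_j z^{-j-1} ∫ u^j g u du` converges absolutely, and
`∫ g u / (z - u) du = ∑_{j=0}^∞ z^{-j-1} ∫ u^j g u du`. -/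
theorem cauchy_transform_laurent_expansion
    (R : ℝ) (hR : 0 < R) (g : ℝ → ℝ) (hg : Integrable g)
    (hsupp : Function.support g ⊆ Set.Icc (-R) R)
    (z : ℂ) (hz : R < ‖z‖) :
    Integrable (fun u : ℝ => (g u : ℂ) / (z - (u : ℂ))) ∧
    Summable (fun j : ℕ => ‖(z ^ (j + 1))⁻¹ * ((∫ u : ℝ, u ^ j * g u : ℝ) : ℂ)‖) ∧
    (∫ u : ℝ, (g u : ℂ) / (z - (u : ℂ)))
      = ∑' j : ℕ, (z ^ (j + 1))⁻¹ * ((∫ u : ℝ, u ^ j * g u : ℝ) : ℂ) := by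
  have hz0 : (0:ℝ) < ‖z‖ := lt_trans hR hz
  have habs : ∀ u : ℝ, g u ≠ 0 → |u| ≤ R := by
    intro u hu
    have := hsupp hu
    exact abs_le.2 ⟨this.1, this.2⟩
  -- bound on 1/(z-u) on support
  have hzu : ∀ u : ℝ, g u ≠ 0 → ‖z‖ - R ≤ ‖z - (u:ℂ)‖ := by
    intro u hu
    have h1 : ‖(u:ℂ)‖ ≤ R := by
      rw [Complex.norm_real, Real.norm_eq_abs]; exact habs u hu
    have := norm_sub_norm_le z (u:ℂ)
    linarith
  -- F j : each term
  set F : ℕ → ℝ → ℂ := fun j u => (z ^ (j + 1))⁻¹ * ((u:ℂ) ^ j * (g u : ℂ)) with hF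
  have hmeas : ∀ j : ℕ, AEStronglyMeasurable (F j) volume := by
    intro j
    apply AEStronglyMeasurable.const_mul
    exact (Complex.continuous_ofReal.measurable.pow_const j).aestronglyMeasurable.mul
      (Complex.continuous_ofReal.comp_aestronglyMeasurable hg.aestronglyMeasurable)
  have hFint : ∀ j : ℕ, Integrable (F j) := by
    intro j
    apply Integrable.mono' ((hg.norm.const_mul (R ^ j * (‖z‖ ^ (j+1))⁻¹))) (hmeas j)
    filter_upwards with u
    by_cases hu : g u = 0
    · simp [hF, hu]
    · have h1 : |u| ≤ R := habs u hu
      simp only [hF, norm_mul, norm_inv, norm_pow, Complex.norm_real, Real.norm_eq_abs,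
        Real.norm_eq_abs]
      have hp : |u| ^ j ≤ R ^ j := pow_le_pow_left₀ (abs_nonneg u) h1 j
      calc (‖z‖ ^ (j+1))⁻¹ * (|u| ^ j * |g u|)
          ≤ (‖z‖ ^ (j+1))⁻¹ * (R ^ j * |g u|) := by
            apply mul_le_mul_of_nonneg_left _ (by positivity)
            exact mul_le_mul_of_nonneg_right hp (abs_nonneg _)
        _ = R ^ j * (‖z‖ ^ (j+1))⁻¹ * |g u| := by ring
  -- integral norm bound
  have hnorm_bd : ∀ j : ℕ, (∫ u, ‖F j u‖) ≤ (R / ‖z‖) ^ j * (‖z‖⁻¹ * ∫ u, |g u|) := by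
    intro j
    have : ∀ u, ‖F j u‖ ≤ (R / ‖z‖) ^ j * (‖z‖⁻¹ * |g u|) := by
      intro u
      by_cases hu : g u = 0
      · simp [hF, hu]
      · have h1 : |u| ≤ R := habs u hu
        simp only [hF, norm_mul, norm_inv, norm_pow, Complex.norm_real, Real.norm_eq_abs,
          Real.norm_eq_abs]
        have hp : |u| ^ j ≤ R ^ j := pow_le_pow_left₀ (abs_nonneg u) h1 j
        rw [div_pow, pow_succ, mul_inv]
        calc (‖z‖ ^ j)⁻¹ * ‖z‖⁻¹ * (|u| ^ j * |g u|)
            ≤ (‖z‖ ^ j)⁻¹ * ‖z‖⁻¹ * (R ^ j * |g u|) := by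
              apply mul_le_mul_of_nonneg_left _ (by positivity)
              exact mul_le_mul_of_nonneg_right hp (abs_nonneg _)
          _ = R ^ j / ‖z‖ ^ j * (‖z‖⁻¹ * |g u|) := by
              rw [div_eq_mul_inv]; ring
    calc (∫ u, ‖F j u‖) ≤ ∫ u, (R / ‖z‖) ^ j * (‖z‖⁻¹ * |g u|) := by
          apply integral_mono (hFint j).norm _ this
          exact (hg.abs.const_mul _).const_mul _
      _ = (R / ‖z‖) ^ j * (‖z‖⁻¹ * ∫ u, |g u|) := by
          rw [integral_const_mul, integral_const_mul]
  have hratio : R / ‖z‖ < 1 := (div_lt_one hz0).2 hz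
  have hsum_norm : Summable (fun j : ℕ => ∫ u, ‖F j u‖) := by
    apply Summable.of_nonneg_of_le (fun j => integral_nonneg fun u => norm_nonneg _) hnorm_bd
    exact (summable_geometric_of_lt_one (by positivity) hratio).mul_right _
  -- pointwise sum
  have hpt : ∀ u : ℝ, ∑' j : ℕ, F j u = (g u : ℂ) / (z - (u:ℂ)) := by
    intro u
    by_cases hu : g u = 0
    · simp [hF, hu]
    · have h1 : ‖(u:ℂ) / z‖ < 1 := by
        rw [norm_div, Complex.norm_real, Real.norm_eq_abs,
          div_lt_one hz0]
        exact lt_of_le_of_lt (habs u hu) hz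
      have hgeo := hasSum_geometric_of_norm_lt_one h1
      have hz' : z ≠ 0 := by
        intro h; rw [h] at hz0; simp at hz0
      have hne : z - (u:ℂ) ≠ 0 := by
        intro h
        have hzu' : z = (u:ℂ) := sub_eq_zero.mp h
        have : ‖z‖ ≤ R := by
          rw [hzu', Complex.norm_real, Real.norm_eq_abs]; exact habs u hu
        linarith
      have hsum := (hgeo.mul_right ((g u : ℂ) / z)).tsum_eq
      have h1z : (1 : ℂ) - (u:ℂ)/z = (z - (u:ℂ))/z := by field_simp
      calc ∑' j : ℕ, F j u = ∑' j : ℕ, ((u:ℂ)/z) ^ j * ((g u : ℂ) / z) := by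
            apply tsum_congr
            intro j
            simp only [hF, div_pow, pow_succ, mul_inv]
            field_simp
        _ = (1 - (u:ℂ)/z)⁻¹ * ((g u : ℂ) / z) := hsum
        _ = (g u : ℂ) / (z - (u:ℂ)) := by
            rw [h1z, inv_div]
            field_simp
  -- integrability of the Cauchy kernel
  have hint : Integrable (fun u : ℝ => (g u : ℂ) / (z - (u : ℂ))) := by
    apply Integrable.mono' (hg.norm.const_mul (‖z‖ - R)⁻¹)
    · simp only [div_eq_mul_inv]
      exact (Complex.continuous_ofReal.comp_aestronglyMeasurable hg.aestronglyMeasurable).mul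
        (Complex.measurable_ofReal.const_sub z).inv.aestronglyMeasurable
    · filter_upwards with u
      by_cases hu : g u = 0
      · simp [hu]
      · have hd : (0:ℝ) < ‖z‖ - R := by linarith
        rw [norm_div]
        simp only [Complex.norm_real, Real.norm_eq_abs, Real.norm_eq_abs]
        rw [div_le_iff₀ (lt_of_lt_of_le hd (hzu u hu))]
        calc |g u| = (‖z‖ - R)⁻¹ * |g u| * (‖z‖ - R) := by
              field_simp
          _ ≤ (‖z‖ - R)⁻¹ * |g u| * ‖z - u‖ := by
              exact mul_le_mul_of_nonneg_left (hzu u hu)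
                (mul_nonneg (inv_nonneg.2 hd.le) (abs_nonneg _))
  refine ⟨hint, ?_, ?_⟩
  · apply Summable.of_nonneg_of_le (fun j => norm_nonneg _) _ hsum_norm
    intro j
    have : (z ^ (j + 1))⁻¹ * ((∫ u : ℝ, u ^ j * g u : ℝ) : ℂ) = ∫ u, F j u := by
      rw [integral_const_mul]
      congr 1
      rw [show (∫ u : ℝ, ((u:ℂ) ^ j * (g u : ℂ))) = ∫ u : ℝ, ((u ^ j * g u : ℝ) : ℂ) from by
        congr 1; ext u; push_cast; ring]
      exact (integral_ofReal (𝕜 := ℂ)).symm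
    rw [this]
    exact norm_integral_le_integral_norm _
  · have := integral_tsum_of_summable_integral_norm hFint hsum_norm
    rw [← integral_congr_ae (Filter.Eventually.of_forall hpt) ]
    rw [← this]
    apply tsum_congr
    intro j
    rw [integral_const_mul]
    congr 1
    rw [show (∫ u : ℝ, ((u:ℂ) ^ j * (g u : ℂ))) = ∫ u : ℝ, ((u ^ j * g u : ℝ) : ℂ) from by
      congr 1; ext u; push_cast; ring]
    exact integral_ofReal (𝕜 := ℂ)
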